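/- Let f be a positive semidefinite form in n variables of degree 2d that is not a sum of squares of forms, and let p be an irreducible indefinite form of degree r in ℝ[x₁,...,xₙ]. Then p²·f is a positive semidefinite form of degree 2d+2r that is not a sum of squares of forms. -/

import Mathlib

open MvPolynomial

/-- A real multivariate polynomial vanishing on a ball is zero. -/
lemma eval_zero_ball_eq_zero : ∀ (m : ℕ) (q : MvPolynomial (Fin m) ℝ) (x0 : Fin m → ℝ) (ε : ℝ),
    0 < ε → (∀ x : Fin m → ℝ, dist x x0 < ε → eval x q = 0) → q = 0 := by
  intro m
  induction m with
  | zero =>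
    intro q x0 ε hε hz
    have h1 : eval x0 q = 0 := hz x0 (by simpa using hε)
    have hq : q = C (coeff 0 q) := by
      apply MvPolynomial.ext
      intro d
      have hd : d = 0 := by ext i; exact i.elim0
      subst hd
      simp [coeff_C]
    rw [hq, eval_C] at h1
    rw [hq, h1, map_zero]
  | succ m ih =>
    intro q x0 ε hε hz
    have hE : finSuccEquiv ℝ m q = 0 := by
      apply Polynomial.ext
      intro j
      rw [Polynomial.coeff_zero]
      apply ih _ (Fin.tail x0) ε hε
      intro u hu
      have hQ : Polynomial.map (eval u) (finSuccEquiv ℝ m q) = 0 := by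
        apply Polynomial.eq_zero_of_infinite_isRoot
        apply Set.Infinite.mono (s := Set.Ioo (x0 0 - ε) (x0 0 + ε))
        · intro s hs
          have hsd : dist s (x0 0) < ε := by
            rw [Real.dist_eq, abs_lt]
            cases hs with
            | intro h1 h2 => constructor <;> linarith
          have hdist : dist (Fin.cons s u : Fin (m+1) → ℝ) x0 < ε := by
            rw [dist_pi_lt_iff hε]
            intro i
            refine Fin.cases ?_ ?_ i
            · simpa using hsd
            · intro k
              simp only [Fin.cons_succ]
              exact (dist_pi_lt_iff hε).mp hu k
          have := hz (Fin.cons s u) hdist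
          rw [eval_eq_eval_mv_eval'] at this
          exact this
        · exact Set.Ioo_infinite (by linarith : x0 0 - ε < x0 0 + ε)
      have := congrArg (fun P => Polynomial.coeff P j) hQ
      simpa [Polynomial.coeff_map] using this
    have := congrArg (finSuccEquiv ℝ m).symm hE
    simpa using this

/-- Nonzero real polynomials have points of nonvanishing in every ball. -/
lemma exists_eval_ne_zero_near {σ : Type*} [Fintype σ] (q : MvPolynomial σ ℝ) (hq : q ≠ 0)
    (x0 : σ → ℝ) (ε : ℝ) (hε : 0 < ε) : ∃ x : σ → ℝ, dist x x0 < ε ∧ eval x q ≠ 0 := by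
  by_contra hcon
  push_neg at hcon
  let e : σ ≃ Fin (Fintype.card σ) := Fintype.equivFin σ
  have h0 : rename e q = 0 := by
    apply eval_zero_ball_eq_zero _ (rename e q) (x0 ∘ e.symm) ε hε
    intro y hy
    rw [eval_rename]
    apply hcon (y ∘ e)
    rw [dist_pi_lt_iff hε]
    intro i
    have := (dist_pi_lt_iff hε).mp hy (e i)
    simpa using this
  exact hq (rename_injective e e.injective (by simpa using h0))

/-- From an indefinite polynomial obtain two points, differing in at most one coordinate,
with strictly opposite signs. -/
lemma exists_axis_sign_change {n : ℕ} (p : MvPolynomial (Fin n) ℝ) (a b : Fin n → ℝ)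
    (ha : eval a p < 0) (hb : 0 < eval b p) :
    ∃ (j : Fin n) (α β : Fin n → ℝ), (∀ i, i ≠ j → α i = β i) ∧
      eval α p < 0 ∧ 0 < eval β p := by
  have hp0 : p ≠ 0 := by rintro rfl; simp at hb
  have hc : Continuous fun x : Fin n → ℝ => eval x p := MvPolynomial.continuous_eval p
  have hOn : IsOpen {x : Fin n → ℝ | eval x p < 0} := isOpen_lt hc continuous_const
  have hOp : IsOpen {x : Fin n → ℝ | 0 < eval x p} := isOpen_lt continuous_const hc
  obtain ⟨ε₁, hε₁, hball₁⟩ := Metric.isOpen_iff.mp hOn a ha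
  obtain ⟨ε₂, hε₂, hball₂⟩ := Metric.isOpen_iff.mp hOp b hb
  set ε := min ε₁ ε₂ with hε
  have hεpos : 0 < ε := lt_min hε₁ hε₂
  -- the mixing maps
  set g : ℕ → Fin n → (Fin n ⊕ Fin n) := fun k i => if (i : ℕ) < k then Sum.inl i else Sum.inr i
    with hg
  have ginj : ∀ k, Function.Injective (g k) := by
    intro k i i' hii
    by_cases hi : (i : ℕ) < k <;> by_cases hi' : (i' : ℕ) < k <;>
      simp [hg, hi, hi'] at hii <;> exact hii
  set Q : MvPolynomial (Fin n ⊕ Fin n) ℝ := ∏ k ∈ Finset.range (n+1), rename (g k) p with hQ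
  have hQ0 : Q ≠ 0 := by
    rw [hQ, Finset.prod_ne_zero_iff]
    intro k _ hzero
    exact hp0 (rename_injective _ (ginj k) (by simpa using hzero))
  set w0 : Fin n ⊕ Fin n → ℝ := Sum.elim b a with hw0
  obtain ⟨w, hwdist, hwQ⟩ := exists_eval_ne_zero_near Q hQ0 w0 ε hεpos
  set v : ℕ → ℝ := fun k => eval (w ∘ g k) p with hv
  have hvne : ∀ k, k ≤ n → v k ≠ 0 := by
    intro k hk
    have : eval w Q = ∏ k ∈ Finset.range (n+1), v k := by
      rw [hQ, map_prod]
      exact Finset.prod_congr rfl fun k _ => eval_rename (g k) w p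
    rw [this, Finset.prod_ne_zero_iff] at hwQ
    exact hwQ k (Finset.mem_range.mpr (by omega))
  have hv0 : v 0 < 0 := by
    apply hball₁
    rw [Metric.mem_ball, dist_pi_lt_iff hε₁]
    intro i
    have h2 := (dist_pi_lt_iff hεpos).mp hwdist (Sum.inr i)
    have : (w ∘ g 0) i = w (Sum.inr i) := by simp [hg]
    rw [this]
    exact lt_of_lt_of_le h2 (min_le_left _ _)
  have hvn : 0 < v n := by
    apply hball₂
    rw [Metric.mem_ball, dist_pi_lt_iff hε₂]
    intro i
    have h2 := (dist_pi_lt_iff hεpos).mp hwdist (Sum.inl i)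
    have : (w ∘ g n) i = w (Sum.inl i) := by simp [hg, i.isLt]
    rw [this]
    exact lt_of_lt_of_le h2 (min_le_right _ _)
  -- find the sign change index
  have hex : ∃ k, k ≤ n ∧ 0 < v k := ⟨n, le_refl _, hvn⟩
  set k0 := Nat.find hex with hk0def
  obtain ⟨hk0n, hk0pos⟩ := Nat.find_spec hex
  rw [← hk0def] at hk0pos hk0n
  have hk0ne : k0 ≠ 0 := by
    intro hc
    rw [hc] at hk0pos
    exact absurd hk0pos (not_lt.mpr (le_of_lt hv0))
  set k := k0 - 1 with hkdef
  have hkk0 : k + 1 = k0 := by omega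
  have hkn : k < n := by omega
  have hvk : v k < 0 := by
    have h1 : v k ≠ 0 := hvne k (by omega)
    have h2 : ¬ (k ≤ n ∧ 0 < v k) := Nat.find_min hex (by omega)
    rcases lt_trichotomy (v k) 0 with h | h | h
    · exact h
    · exact absurd h h1
    · exact absurd ⟨by omega, h⟩ h2
  refine ⟨⟨k, hkn⟩, w ∘ g k, w ∘ g (k+1), ?_, hvk, by rw [hkk0]; exact hk0pos⟩
  intro i hij
  have hik : (i : ℕ) ≠ k := fun hc => hij (Fin.ext hc)
  simp only [Function.comp_apply, hg]
  by_cases h : (i : ℕ) < k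
  · rw [if_pos h, if_pos (by omega)]
  · rw [if_neg h, if_neg (by omega)]

/-- If `p` is nonzero homogeneous of degree `r` and `p * g` is homogeneous of degree `r + d`,
then `g` is homogeneous of degree `d`. -/
lemma isHomogeneous_of_mul_left {n r d : ℕ} (p g : MvPolynomial (Fin n) ℝ) (hp0 : p ≠ 0)
    (hphom : p.IsHomogeneous r) (hmul : (p * g).IsHomogeneous (r + d)) : g.IsHomogeneous d := by
  set N := g.totalDegree with hN
  have hcomp : ∀ i ∈ Finset.range (N+1), i ≠ d → homogeneousComponent i g = 0 := by
    intro i hi hne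
    have h1 : homogeneousComponent (r+i) (p*g) = 0 := by
      rw [homogeneousComponent_of_mem ((mem_homogeneousSubmodule _ _).mpr hmul),
        if_neg (by omega)]
    have h2 : homogeneousComponent (r+i) (p*g) = p * homogeneousComponent i g := by
      conv_lhs => rw [show p * g = ∑ j ∈ Finset.range (N+1), p * homogeneousComponent j g from by
        rw [← Finset.mul_sum, sum_homogeneousComponent]]
      rw [map_sum]
      have : ∀ j ∈ Finset.range (N+1),
          homogeneousComponent (r+i) (p * homogeneousComponent j g)
            = if i = j then p * homogeneousComponent j g else 0 := by
        intro j _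
        rw [homogeneousComponent_of_mem ((mem_homogeneousSubmodule _ _).mpr
          (hphom.mul (homogeneousComponent_isHomogeneous j g)))]
        by_cases h : i = j
        · rw [if_pos (by omega), if_pos h]
        · rw [if_neg (by omega), if_neg h]
      rw [Finset.sum_congr rfl this, Finset.sum_ite_eq, if_pos hi]
    rw [h1] at h2
    rcases mul_eq_zero.mp h2.symm with h | h
    · exact absurd h hp0
    · exact h
  have hgsum : g = ∑ i ∈ Finset.range (N+1), homogeneousComponent i g :=
    (sum_homogeneousComponent g).symm
  rw [hgsum]
  apply IsHomogeneous.sum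
  intro i hi
  by_cases h : i = d
  · subst h; exact homogeneousComponent_isHomogeneous i g
  · rw [hcomp i hi h]; exact isHomogeneous_zero _ _ _

/-- Key lemma: an irreducible polynomial changing sign across a coordinate direction divides
every polynomial vanishing on its real zero set. -/
lemma dvd_of_vanishing_aux {m : ℕ} (p h : MvPolynomial (Fin (m+1)) ℝ)
    (hpirr : Irreducible p) (j : Fin (m+1)) (α β : Fin (m+1) → ℝ)
    (hagree : ∀ i, i ≠ j → α i = β i) (hα : eval α p < 0) (hβ : 0 < eval β p)
    (hvan : ∀ z : Fin (m+1) → ℝ, eval z p = 0 → eval z h = 0) : p ∣ h := by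
  classical
  set τ := Equiv.swap (0 : Fin (m+1)) j with hτ
  set p₁ := rename τ p with hp₁
  set h₁ := rename τ h with hh₁
  set α₁ := α ∘ τ with hα₁
  set β₁ := β ∘ τ with hβ₁
  have hcompself : ∀ x : Fin (m+1) → ℝ, (x ∘ τ) ∘ τ = x := by
    intro x; funext i
    simp [hτ, Equiv.swap_apply_self]
  have hevalp₁ : ∀ x : Fin (m+1) → ℝ, eval x p₁ = eval (x ∘ τ) p := fun x =>
    eval_rename τ x p
  have hevalh₁ : ∀ x : Fin (m+1) → ℝ, eval x h₁ = eval (x ∘ τ) h := fun x =>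
    eval_rename τ x h
  have hα₁v : eval α₁ p₁ < 0 := by rw [hevalp₁, hα₁, hcompself]; exact hα
  have hβ₁v : 0 < eval β₁ p₁ := by rw [hevalp₁, hβ₁, hcompself]; exact hβ
  have hagree₁ : ∀ i, i ≠ (0 : Fin (m+1)) → α₁ i = β₁ i := by
    intro i hi
    apply hagree
    intro hc
    exact hi (τ.injective (hc.trans (Equiv.swap_apply_left 0 j).symm))
  have hvan₁ : ∀ z : Fin (m+1) → ℝ, eval z p₁ = 0 → eval z h₁ = 0 := by
    intro z hz
    rw [hevalh₁]
    exact hvan _ (by rw [← hevalp₁]; exact hz)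
  have hirr₁ : Irreducible p₁ := by
    have := hpirr.map (renameEquiv ℝ τ)
    simpa [renameEquiv_apply] using this
  suffices hdvd₁ : p₁ ∣ h₁ by
    have := map_dvd (renameEquiv ℝ τ).symm hdvd₁
    rw [hp₁, hh₁] at this
    simpa [renameEquiv_symm, rename_rename, Equiv.symm_comp_self] using this
  by_contra hnd
  set E := finSuccEquiv ℝ m with hE
  set pt := E p₁ with hpt
  set ht := E h₁ with hht
  have htail : Fin.tail β₁ = Fin.tail α₁ :=
    funext fun i => (hagree₁ i.succ (Fin.succ_ne_zero i)).symm
  -- pt has positive degree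
  have hppos : 0 < pt.natDegree := by
    by_contra h0
    push_neg at h0
    obtain ⟨c, hc⟩ := Polynomial.natDegree_eq_zero.mp (Nat.le_zero.mp h0)
    have hev : ∀ (s : ℝ) (u : Fin m → ℝ), eval (Fin.cons s u : Fin (m+1) → ℝ) p₁ = eval u c := by
      intro s u
      rw [eval_eq_eval_mv_eval', ← hE, ← hpt, ← hc, Polynomial.map_C, Polynomial.eval_C]
    have h1 : eval α₁ p₁ = eval (Fin.tail α₁) c := by
      conv_lhs => rw [← Fin.cons_self_tail α₁]
      rw [hev]
    have h2 : eval β₁ p₁ = eval (Fin.tail α₁) c := by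
      conv_lhs => rw [← Fin.cons_self_tail β₁]
      rw [hev, htail]
    rw [h1] at hα₁v
    rw [h2] at hβ₁v
    linarith
  have hptirr : Irreducible pt := hirr₁.map E
  have hptndvd : ¬ pt ∣ ht := by
    intro hdvd
    apply hnd
    have := map_dvd E.symm hdvd
    simpa [hpt, hht] using this
  have hprim : pt.IsPrimitive := by
    intro c hc
    obtain ⟨q, hq⟩ := hc
    rcases hptirr.isUnit_or_isUnit hq with hu | hu
    · exact Polynomial.isUnit_C.mp hu
    · exfalso
      obtain ⟨r', hr', hq'⟩ := Polynomial.isUnit_iff.mp hu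
      rw [hq, ← hq'] at hppos
      simp only [← Polynomial.C_mul, Polynomial.natDegree_C, lt_self_iff_false] at hppos
  -- move to the fraction field
  letI : NormalizationMonoid (MvPolynomial (Fin m) ℝ) :=
    UniqueFactorizationMonoid.normalizationMonoid.toNormalizationMonoid
  letI := UniqueFactorizationMonoid.toNormalizedGCDMonoid (MvPolynomial (Fin m) ℝ)
  set K := FractionRing (MvPolynomial (Fin m) ℝ) with hK
  set φ := algebraMap (MvPolynomial (Fin m) ℝ) K with hφ
  have hφinj : Function.Injective φ := IsFractionRing.injective _ _
  have hmapirr : Irreducible (pt.map φ) :=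
    (hprim.irreducible_iff_irreducible_map_fraction_map).mp hptirr
  have hmapndvd : ¬ pt.map φ ∣ ht.map φ := by
    intro hdvd
    apply hptndvd
    have hht0 : ht ≠ 0 := fun h0 => hptndvd (h0 ▸ dvd_zero _)
    have hcu : IsUnit (Polynomial.C (φ ht.content)) := by
      apply Polynomial.isUnit_C.mpr
      apply isUnit_iff_ne_zero.mpr
      intro hc0
      exact hht0 (Polynomial.content_eq_zero_iff.mp ((injective_iff_map_eq_zero φ).mp hφinj _ hc0))
    have heq : ht.map φ = Polynomial.C (φ ht.content) * ht.primPart.map φ := by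
      conv_lhs => rw [ht.eq_C_content_mul_primPart]
      rw [Polynomial.map_mul, Polynomial.map_C]
    rw [heq, hcu.dvd_mul_left] at hdvd
    exact dvd_trans (hprim.dvd_of_fraction_map_dvd_fraction_map
      hdvd) (ht.primPart_dvd)
  have hcop : IsCoprime (pt.map φ) (ht.map φ) := hmapirr.coprime_iff_not_dvd.mpr hmapndvd
  obtain ⟨A, B, hAB⟩ := hcop
  obtain ⟨sa, hsa⟩ := IsLocalization.integerNormalization_map_to_map
    (nonZeroDivisors (MvPolynomial (Fin m) ℝ)) A
  obtain ⟨sb, hsb⟩ := IsLocalization.integerNormalization_map_to_map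
    (nonZeroDivisors (MvPolynomial (Fin m) ℝ)) B
  set intA := IsLocalization.integerNormalization
    (nonZeroDivisors (MvPolynomial (Fin m) ℝ)) A with hintA
  set intB := IsLocalization.integerNormalization
    (nonZeroDivisors (MvPolynomial (Fin m) ℝ)) B with hintB
  set c : MvPolynomial (Fin m) ℝ := (sa : MvPolynomial (Fin m) ℝ) * (sb : MvPolynomial (Fin m) ℝ)
    with hcdef
  have hc0 : c ≠ 0 := mul_ne_zero (mem_nonZeroDivisors_iff_ne_zero.mp sa.2)
    (mem_nonZeroDivisors_iff_ne_zero.mp sb.2)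
  have hid : (Polynomial.C (sb : MvPolynomial (Fin m) ℝ) * intA) * pt
      + (Polynomial.C (sa : MvPolynomial (Fin m) ℝ) * intB) * ht
      = Polynomial.C c := by
    apply Polynomial.map_injective φ hφinj
    rw [Polynomial.map_add, Polynomial.map_mul, Polynomial.map_mul, Polynomial.map_mul,
      Polynomial.map_mul, Polynomial.map_C, Polynomial.map_C, Polynomial.map_C, hsa, hsb,
      Algebra.smul_def, Algebra.smul_def, Polynomial.algebraMap_apply, Polynomial.algebraMap_apply]
    rw [hcdef, map_mul, Polynomial.C_mul]
    linear_combination (Polynomial.C (φ (sa : MvPolynomial (Fin m) ℝ))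
      * Polynomial.C (φ (sb : MvPolynomial (Fin m) ℝ))) * hAB
  -- pull the Bezout identity back
  have hid₁ : E.symm (Polynomial.C (sb : MvPolynomial (Fin m) ℝ)) * E.symm intA * p₁
      + E.symm (Polynomial.C (sa : MvPolynomial (Fin m) ℝ)) * E.symm intB * h₁
      = E.symm (Polynomial.C c) := by
    have := congrArg E.symm hid
    rw [map_add, map_mul, map_mul] at this
    simpa [hpt, hht] using this
  have hevalC : ∀ (s : ℝ) (u : Fin m → ℝ),
      eval (Fin.cons s u : Fin (m+1) → ℝ) (E.symm (Polynomial.C c)) = eval u c := by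
    intro s u
    rw [eval_eq_eval_mv_eval', ← hE, AlgEquiv.apply_symm_apply, Polynomial.map_C,
      Polynomial.eval_C]
  -- continuity setup
  have hconsα : (Fin.cons (α₁ 0) (Fin.tail α₁) : Fin (m+1) → ℝ) = α₁ := Fin.cons_self_tail α₁
  have hconsβ : (Fin.cons (β₁ 0) (Fin.tail α₁) : Fin (m+1) → ℝ) = β₁ := by
    rw [← htail]; exact Fin.cons_self_tail β₁
  have hcontcons : ∀ s : ℝ, Continuous fun u : Fin m → ℝ => (Fin.cons s u : Fin (m+1) → ℝ) := by
    intro s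
    apply continuous_pi
    intro i
    refine Fin.cases ?_ ?_ i
    · simpa using continuous_const
    · intro k
      simpa using continuous_apply k
  have hcont1 : Continuous fun u : Fin m → ℝ => eval (Fin.cons (α₁ 0) u : Fin (m+1) → ℝ) p₁ :=
    (MvPolynomial.continuous_eval p₁).comp (hcontcons (α₁ 0))
  have hcont2 : Continuous fun u : Fin m → ℝ => eval (Fin.cons (β₁ 0) u : Fin (m+1) → ℝ) p₁ :=
    (MvPolynomial.continuous_eval p₁).comp (hcontcons (β₁ 0))
  have hO1 : IsOpen {u : Fin m → ℝ | eval (Fin.cons (α₁ 0) u : Fin (m+1) → ℝ) p₁ < 0} :=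
    isOpen_lt hcont1 continuous_const
  have hO2 : IsOpen {u : Fin m → ℝ | 0 < eval (Fin.cons (β₁ 0) u : Fin (m+1) → ℝ) p₁} :=
    isOpen_lt continuous_const hcont2
  obtain ⟨δ₁, hδ₁, hball₁⟩ := Metric.isOpen_iff.mp hO1 (Fin.tail α₁) (by
    show eval (Fin.cons (α₁ 0) (Fin.tail α₁) : Fin (m+1) → ℝ) p₁ < 0
    rw [hconsα]; exact hα₁v)
  obtain ⟨δ₂, hδ₂, hball₂⟩ := Metric.isOpen_iff.mp hO2 (Fin.tail α₁) (by
    show 0 < eval (Fin.cons (β₁ 0) (Fin.tail α₁) : Fin (m+1) → ℝ) p₁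
    rw [hconsβ]; exact hβ₁v)
  set δ := min δ₁ δ₂ with hδdef
  have hδpos : 0 < δ := lt_min hδ₁ hδ₂
  -- c vanishes on a ball
  have hcvan : ∀ u : Fin m → ℝ, dist u (Fin.tail α₁) < δ → eval u c = 0 := by
    intro u hu
    have hu1 : u ∈ Metric.ball (Fin.tail α₁) δ₁ :=
      Metric.mem_ball.mpr (lt_of_lt_of_le hu (min_le_left _ _))
    have hu2 : u ∈ Metric.ball (Fin.tail α₁) δ₂ :=
      Metric.mem_ball.mpr (lt_of_lt_of_le hu (min_le_right _ _))
    have hneg : eval (Fin.cons (α₁ 0) u : Fin (m+1) → ℝ) p₁ < 0 := hball₁ hu1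
    have hpos : 0 < eval (Fin.cons (β₁ 0) u : Fin (m+1) → ℝ) p₁ := hball₂ hu2
    set gfun := fun s : ℝ => eval (Fin.cons s u : Fin (m+1) → ℝ) p₁ with hgfun
    have hgcont : Continuous gfun := by
      apply (MvPolynomial.continuous_eval p₁).comp
      apply continuous_pi
      intro i
      refine Fin.cases ?_ ?_ i
      · simpa using continuous_id'
      · intro k
        simpa using continuous_const
    have h0mem : (0 : ℝ) ∈ Set.uIcc (gfun (α₁ 0)) (gfun (β₁ 0)) :=
      Set.mem_uIcc.mpr (Or.inl ⟨le_of_lt hneg, le_of_lt hpos⟩)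
    obtain ⟨s, _, hs⟩ := intermediate_value_uIcc hgcont.continuousOn h0mem
    have hz : eval (Fin.cons s u : Fin (m+1) → ℝ) p₁ = 0 := hs
    have hzh : eval (Fin.cons s u : Fin (m+1) → ℝ) h₁ = 0 := hvan₁ _ hz
    have := congrArg (eval (Fin.cons s u : Fin (m+1) → ℝ)) hid₁
    simp only [map_add, map_mul, hz, hzh, mul_zero, add_zero, hevalC] at this
    exact this.symm
  have : c = 0 := eval_zero_ball_eq_zero m c (Fin.tail α₁) δ hδpos hcvan
  exact hc0 this

/-- An irreducible indefinite polynomial divides every polynomial vanishing on its real zeros. -/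
lemma dvd_of_vanishing {n : ℕ} (p h : MvPolynomial (Fin n) ℝ) (hpirr : Irreducible p)
    (a b : Fin n → ℝ) (ha : eval a p < 0) (hb : 0 < eval b p)
    (hvan : ∀ z : Fin n → ℝ, eval z p = 0 → eval z h = 0) : p ∣ h := by
  cases n with
  | zero =>
    exfalso
    have hab : a = b := funext fun i => i.elim0
    rw [hab] at ha
    linarith
  | succ m =>
    obtain ⟨j, α, β, hagree, hα, hβ⟩ := exists_axis_sign_change p a b ha hb
    exact dvd_of_vanishing_aux p h hpirr j α β hagree hα hβ hvan

/-- If `f` is a psd form of degree 2d that is not a sum of squares of forms, and `p` is an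
irreducible indefinite form of degree `r`, then `p^2 * f` is a psd form of degree `2d + 2r`
that is not a sum of squares of forms. -/
theorem stmt0 (n d r : ℕ) (f p : MvPolynomial (Fin n) ℝ)
    (hfhom : f.IsHomogeneous (2 * d))
    (hfpsd : ∀ x : Fin n → ℝ, 0 ≤ eval x f)
    (hfnotsos : ¬ ∃ (k : ℕ) (h : Fin k → MvPolynomial (Fin n) ℝ),
      (∀ t, (h t).IsHomogeneous d) ∧ f = ∑ t, (h t) ^ 2)
    (hphom : p.IsHomogeneous r)
    (hpirr : Irreducible p)
    (hpindef : (∃ a : Fin n → ℝ, eval a p < 0) ∧ (∃ b : Fin n → ℝ, 0 < eval b p)) :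
    (p ^ 2 * f).IsHomogeneous (2 * d + 2 * r) ∧
    (∀ x : Fin n → ℝ, 0 ≤ eval x (p ^ 2 * f)) ∧
    ¬ ∃ (k : ℕ) (h : Fin k → MvPolynomial (Fin n) ℝ),
      (∀ t, (h t).IsHomogeneous (d + r)) ∧ p ^ 2 * f = ∑ t, (h t) ^ 2 := by
  obtain ⟨⟨a, ha⟩, ⟨b, hb⟩⟩ := hpindef
  have hp0 : p ≠ 0 := by
    rintro rfl
    simp at hb
  refine ⟨?_, ?_, ?_⟩
  · have h1 : (p ^ 2).IsHomogeneous (r + r) := by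
      rw [pow_two]
      exact hphom.mul hphom
    have h2 : (p ^ 2 * f).IsHomogeneous ((r + r) + 2 * d) := h1.mul hfhom
    have : (r + r) + 2 * d = 2 * d + 2 * r := by ring
    rwa [this] at h2
  · intro x
    rw [map_mul, map_pow]
    exact mul_nonneg (sq_nonneg _) (hfpsd x)
  · rintro ⟨k, h, hhom, heq⟩
    apply hfnotsos
    have hvan : ∀ t (z : Fin n → ℝ), eval z p = 0 → eval z (h t) = 0 := by
      intro t z hz
      have h0 : ∑ t, (eval z (h t)) ^ 2 = 0 := by
        have := congrArg (eval z) heq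
        rw [map_mul, map_pow, hz] at this
        simpa using this.symm
      have := (Finset.sum_eq_zero_iff_of_nonneg (fun i _ => sq_nonneg (eval z (h i)))).mp h0
        t (Finset.mem_univ t)
      exact (pow_eq_zero_iff (by norm_num : (2:ℕ) ≠ 0)).mp this
    have hdvd : ∀ t, p ∣ h t := fun t =>
      dvd_of_vanishing p (h t) hpirr a b ha hb (hvan t)
    choose g hg using hdvd
    refine ⟨k, g, ?_, ?_⟩
    · intro t
      apply isHomogeneous_of_mul_left p (g t) hp0 hphom
      rw [← hg t]
      have := hhom t
      rwa [show d + r = r + d by ring] at this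
    · have hcancel : p ^ 2 * f = p ^ 2 * ∑ t, (g t) ^ 2 := by
        rw [heq, Finset.mul_sum]
        apply Finset.sum_congr rfl
        intro t _
        rw [hg t, mul_pow]
      exact mul_left_cancel₀ (pow_ne_zero 2 hp0) hcancel
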